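/- Let ε be a real number with 0 < ε < 1/2 and let ρ be a real number with 0 ≤ ρ < 1 such that (ρ + (1 − ρ)²)/(1 + (1 − ρ)²) ≤ 1 − ε. Then (ρ + (1 − ρ)²)/(1 + (1 − ρ)²) − ρ ≥ (1 − 2ε² − √(1 − 4ε²))/(2ε). That is, as long as one application of the ratio-improvement function does not exceed 1 − ε, each application improves the ratio by at least (1 − 2ε² − √(1 − 4ε²))/(2ε). -/

import Mathlib

/-- As long as one application of the ratio-improvement function does not exceed
`1 − ε`, each application improves the ratio by at least
`(1 − 2ε² − √(1 − 4ε²))/(2ε)`. -/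
theorem stmt_12 (ε : ℝ) (hε0 : 0 < ε) (hε1 : ε < 1 / 2)
    (ρ : ℝ) (h0 : 0 ≤ ρ) (h1 : ρ < 1)
    (h : (ρ + (1 - ρ) ^ 2) / (1 + (1 - ρ) ^ 2) ≤ 1 - ε) :
    (1 - 2 * ε ^ 2 - Real.sqrt (1 - 4 * ε ^ 2)) / (2 * ε) ≤
      (ρ + (1 - ρ) ^ 2) / (1 + (1 - ρ) ^ 2) - ρ := by
  have ht0 : 0 < 1 - ρ := by linarith
  have hden : 0 < 1 + (1 - ρ) ^ 2 := by positivity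
  have hcond : ε * (1 + (1 - ρ) ^ 2) ≤ 1 - ρ := by
    have := (div_le_iff₀ hden).mp h
    nlinarith
  set s := Real.sqrt (1 - 4 * ε ^ 2) with hs
  have hsnn : 0 ≤ s := Real.sqrt_nonneg _
  have hssq : s ^ 2 = 1 - 4 * ε ^ 2 := Real.sq_sqrt (by nlinarith)
  have hkey : 1 - s ≤ 2 * ε * (1 - ρ) := by
    rcases le_or_gt (1 - 2 * ε * (1 - ρ)) 0 with hc | hc
    · linarith
    · nlinarith [sq_nonneg (1 - 2 * ε * (1 - ρ))]
  rw [div_sub' (ne_of_gt hden), div_le_div_iff₀ (by linarith) hden]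
  nlinarith [mul_nonneg (mul_nonneg hsnn hε0.le) ht0.le,
    mul_nonneg (sub_nonneg.mpr hkey) (mul_nonneg ht0.le ht0.le),
    mul_nonneg (sub_nonneg.mpr hkey) (sub_nonneg.mpr hcond),
    mul_nonneg (mul_nonneg (sub_nonneg.mpr hkey) (sub_nonneg.mpr hkey)) ht0.le,
    sq_nonneg (2 * ε * (1 - ρ) - (1 - s)), mul_pos hε0 ht0]
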